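/- Let V be a complex Banach space with the Bohl–Bohr property, p ∈ ℕ, and let A : ℝ → Matrix (Fin p) (Fin p) ℂ be bounded and continuous with every entry almost automorphic, upper triangular (a_{ij}(t) = 0 for all t whenever i > j), and such that for each k the diagonal entry satisfies a_{kk}(t) = i·β_k(t) with β_k : ℝ → ℝ and t ↦ ∫_0^t β_k(s) ds bounded on ℝ. Let f : ℝ → (Fin p → V) be bounded, continuous and almost automorphic. Then every bounded differentiable solution y : ℝ → (Fin p → V) of the system y_i'(t) = Σ_j a_{ij}(t)·y_j(t) + f_i(t), i = 1,…,p, is almost automorphic. -/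

import Mathlib

open MeasureTheory Filter Topology

attribute [local instance] Matrix.linftyOpNormedAddCommGroup Matrix.linftyOpNormedRing
  Matrix.linftyOpNormedAlgebra

/-- A continuous function `ψ : ℝ → V` into a Banach space is almost automorphic if for every
sequence of reals there is a subsequence `(τₙ)` and a function `ψ̃` with
`ψ(t+τₙ) → ψ̃(t)` and `ψ̃(t−τₙ) → ψ(t)` pointwise on `ℝ`. -/
def AlmostAutomorphic {V : Type*} [NormedAddCommGroup V] (ψ : ℝ → V) : Prop :=
  Continuous ψ ∧ ∀ σ : ℕ → ℝ, ∃ k : ℕ → ℕ, StrictMono k ∧ ∃ ψt : ℝ → V,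
    (∀ t : ℝ, Tendsto (fun n => ψ (t + σ (k n))) atTop (𝓝 (ψt t))) ∧
    (∀ t : ℝ, Tendsto (fun n => ψt (t - σ (k n))) atTop (𝓝 (ψ t)))

/-- A Banach space `V` has the Bohl–Bohr property if every bounded primitive of an
almost automorphic function `ℝ → V` is almost automorphic. -/
def BohlBohrSpace (V : Type*) [NormedAddCommGroup V] [NormedSpace ℂ V] : Prop :=
  ∀ f : ℝ → V, AlmostAutomorphic f →
    (∃ C, ∀ t : ℝ, ‖∫ s in (0 : ℝ)..t, f s‖ ≤ C) →
    AlmostAutomorphic (fun t => ∫ s in (0 : ℝ)..t, f s)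

section AAlemmas
variable {V W : Type*} [NormedAddCommGroup V] [NormedAddCommGroup W]

lemma aa_const (c : V) : AlmostAutomorphic (fun _ => c) :=
  ⟨continuous_const, fun _ => ⟨id, strictMono_id, fun _ => c,
    fun _ => tendsto_const_nhds, fun _ => tendsto_const_nhds⟩⟩

lemma aa_comp {ψ : ℝ → V} (h : AlmostAutomorphic ψ) {F : V → W} (hF : Continuous F) :
    AlmostAutomorphic (fun t => F (ψ t)) := by
  refine ⟨hF.comp h.1, fun σ => ?_⟩
  obtain ⟨k, hk, φ, h1, h2⟩ := h.2 σ
  exact ⟨k, hk, fun t => F (φ t),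
    fun t => (hF.tendsto _).comp (h1 t), fun t => (hF.tendsto _).comp (h2 t)⟩

lemma aa_pair {ψ₁ : ℝ → V} {ψ₂ : ℝ → W} (h1 : AlmostAutomorphic ψ₁)
    (h2 : AlmostAutomorphic ψ₂) : AlmostAutomorphic (fun t => (ψ₁ t, ψ₂ t)) := by
  refine ⟨h1.1.prodMk h2.1, fun σ => ?_⟩
  obtain ⟨k₁, hk₁, φ₁, h11, h12⟩ := h1.2 σ
  obtain ⟨k₂, hk₂, φ₂, h21, h22⟩ := h2.2 (σ ∘ k₁)
  refine ⟨k₁ ∘ k₂, hk₁.comp hk₂, fun t => (φ₁ t, φ₂ t), fun t => ?_, fun t => ?_⟩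
  · exact ((h11 t).comp hk₂.tendsto_atTop).prodMk_nhds (h21 t)
  · exact ((h12 t).comp hk₂.tendsto_atTop).prodMk_nhds (h22 t)

lemma aa_add {ψ₁ ψ₂ : ℝ → V} (h1 : AlmostAutomorphic ψ₁) (h2 : AlmostAutomorphic ψ₂) :
    AlmostAutomorphic (fun t => ψ₁ t + ψ₂ t) :=
  aa_comp (aa_pair h1 h2) (continuous_fst.add continuous_snd)

lemma aa_smul [NormedSpace ℂ V] {a : ℝ → ℂ} {ψ : ℝ → V} (ha : AlmostAutomorphic a)
    (hψ : AlmostAutomorphic ψ) : AlmostAutomorphic (fun t => a t • ψ t) :=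
  aa_comp (aa_pair ha hψ) (continuous_fst.smul continuous_snd)

lemma aa_sum {ι : Type*} (s : Finset ι) (F : ι → ℝ → V)
    (h : ∀ i ∈ s, AlmostAutomorphic (F i)) :
    AlmostAutomorphic (fun t => ∑ i ∈ s, F i t) := by
  classical
  induction s using Finset.induction with
  | empty => simpa using aa_const (0 : V)
  | insert _ _ hni ih =>
    rename_i a s
    simp only [Finset.sum_insert hni]
    exact aa_add (h a (Finset.mem_insert_self a s))
      (ih fun i hi => h i (Finset.mem_insert_of_mem hi))

lemma aa_extract_list {ι : Type*} (l : List ι) (ψ : ι → ℝ → V)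
    (h : ∀ i, AlmostAutomorphic (ψ i)) (σ : ℕ → ℝ) :
    ∃ k : ℕ → ℕ, StrictMono k ∧ ∀ i ∈ l, ∃ φ : ℝ → V,
      (∀ t, Tendsto (fun n => ψ i (t + σ (k n))) atTop (𝓝 (φ t))) ∧
      (∀ t, Tendsto (fun n => φ (t - σ (k n))) atTop (𝓝 (ψ i t))) := by
  induction l with
  | nil => exact ⟨id, strictMono_id, by simp⟩
  | cons a l ih =>
    obtain ⟨k, hk, hl⟩ := ih
    obtain ⟨k', hk', φ, h1, h2⟩ := (h a).2 (σ ∘ k)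
    refine ⟨k ∘ k', hk.comp hk', fun i hi => ?_⟩
    rcases List.mem_cons.1 hi with rfl | hi
    · exact ⟨φ, h1, h2⟩
    · obtain ⟨φi, hφ1, hφ2⟩ := hl i hi
      exact ⟨φi, fun t => (hφ1 t).comp hk'.tendsto_atTop,
        fun t => (hφ2 t).comp hk'.tendsto_atTop⟩

lemma aa_pi {ι : Type*} [Fintype ι] (ψ : ι → ℝ → V)
    (h : ∀ i, AlmostAutomorphic (ψ i)) : AlmostAutomorphic (fun t i => ψ i t) := by
  classical
  refine ⟨continuous_pi fun i => (h i).1, fun σ => ?_⟩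
  obtain ⟨k, hk, hl⟩ := aa_extract_list Finset.univ.toList ψ h σ
  have H : ∀ i : ι, ∃ φ : ℝ → V,
      (∀ t, Tendsto (fun n => ψ i (t + σ (k n))) atTop (𝓝 (φ t))) ∧
      (∀ t, Tendsto (fun n => φ (t - σ (k n))) atTop (𝓝 (ψ i t))) :=
    fun i => hl i (by simp [Finset.mem_toList])
  choose φ h1 h2 using H
  refine ⟨k, hk, fun t i => φ i t, fun t => ?_, fun t => ?_⟩
  · exact tendsto_pi_nhds.2 fun i => h1 i t
  · exact tendsto_pi_nhds.2 fun i => h2 i t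

lemma real_bb {V : Type*} [NormedAddCommGroup V] [NormedSpace ℂ V] [CompleteSpace V]
    (hV : BohlBohrSpace V) (v : V) (hv : v ≠ 0) {g : ℝ → ℝ}
    (hg : AlmostAutomorphic g) (hgb : ∃ C, ∀ t, |∫ s in (0:ℝ)..t, g s| ≤ C) :
    AlmostAutomorphic (fun t => ∫ s in (0:ℝ)..t, g s) := by
  obtain ⟨φ, _, hφv⟩ := exists_dual_vector ℂ v (norm_ne_zero_iff.2 hv)
  set G := fun t => ∫ s in (0:ℝ)..t, g s with hG
  have hf : AlmostAutomorphic (fun t => g t • v) :=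
    aa_comp hg (continuous_id.smul continuous_const)
  have hprim : ∀ t, ∫ s in (0:ℝ)..t, g s • v = G t • v := fun t =>
    intervalIntegral.integral_smul_const _ _
  obtain ⟨C, hC⟩ := hgb
  have hb : ∃ C', ∀ t, ‖∫ s in (0:ℝ)..t, g s • v‖ ≤ C' := by
    refine ⟨C * ‖v‖, fun t => ?_⟩
    rw [hprim, norm_smul, Real.norm_eq_abs]
    exact mul_le_mul_of_nonneg_right (hC t) (norm_nonneg v)
  have hPaa := hV _ hf hb
  simp only [funext hprim] at hPaa
  have key := aa_comp hPaa
    (F := fun w => ‖v‖⁻¹ * (φ w).re)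
    (continuous_const.mul (Complex.continuous_re.comp φ.continuous))
  convert key using 1
  funext t
  have h1 : φ (G t • v) = (G t : ℂ) * ‖v‖ := by
    rw [← Complex.coe_smul, φ.map_smul, hφv, smul_eq_mul]; norm_num [RCLike.ofReal]
  have hvne : ‖v‖ ≠ 0 := norm_ne_zero_iff.2 hv
  simp only [h1, Complex.mul_re, Complex.ofReal_re, Complex.ofReal_im]
  field_simp
  ring

end AAlemmas

theorem massera_triangular_system_imaginary_diagonal
    {V : Type*} [NormedAddCommGroup V] [NormedSpace ℂ V] [CompleteSpace V] {p : ℕ}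
    (hV : BohlBohrSpace V)
    (A : ℝ → Matrix (Fin p) (Fin p) ℂ)
    (hAc : Continuous A) (hAb : ∃ C, ∀ t, ‖A t‖ ≤ C)
    (hAaa : ∀ i j : Fin p, AlmostAutomorphic (fun t => A t i j))
    (htri : ∀ (t : ℝ) (i j : Fin p), j < i → A t i j = 0)
    (β : Fin p → ℝ → ℝ)
    (hdiag : ∀ (k : Fin p) (t : ℝ), A t k k = Complex.I * (β k t : ℂ))
    (hβprim : ∀ k : Fin p, ∃ C, ∀ t : ℝ, |∫ s in (0 : ℝ)..t, β k s| ≤ C)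
    (f : ℝ → (Fin p → V)) (hfc : Continuous f) (hfb : ∃ C, ∀ t, ‖f t‖ ≤ C)
    (hfaa : AlmostAutomorphic f)
    (y : ℝ → (Fin p → V))
    (hy : ∀ (t : ℝ) (i : Fin p),
      HasDerivAt (fun t => y t i) ((∑ j : Fin p, A t i j • y t j) + f t i) t)
    (hyb : ∃ C, ∀ t : ℝ, ‖y t‖ ≤ C) :
    AlmostAutomorphic y := by
  classical
  by_cases hVtriv : ∀ v : V, v = 0
  · have hy0 : y = fun _ _ => (0 : V) := funext fun t => funext fun i => hVtriv _
    rw [hy0]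
    exact aa_const _
  push_neg at hVtriv
  obtain ⟨v, hv⟩ := hVtriv
  -- basic continuity facts
  have hyc : ∀ i : Fin p, Continuous (fun t => y t i) := fun i =>
    continuous_iff_continuousAt.2 fun t => (hy t i).continuousAt
  have hβc : ∀ k : Fin p, Continuous (β k) := by
    intro k
    have h1 : Continuous (fun t => (A t k k).im) :=
      Complex.continuous_im.comp (hAaa k k).1
    have h2 : (fun t => (A t k k).im) = β k := by
      funext t; rw [hdiag]; simp
    rwa [h2] at h1
  have hβaa : ∀ k : Fin p, AlmostAutomorphic (β k) := by
    intro k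
    have h1 : AlmostAutomorphic (fun t => (A t k k).im) :=
      aa_comp (hAaa k k) Complex.continuous_im
    have h2 : (fun t => (A t k k).im) = β k := by
      funext t; rw [hdiag]; simp
    rwa [h2] at h1
  obtain ⟨C, hC⟩ := hyb
  -- the key induction step
  have key : ∀ i : Fin p, (∀ j : Fin p, i < j → AlmostAutomorphic (fun t => y t j)) →
      AlmostAutomorphic (fun t => y t i) := by
    intro i hind
    set B : ℝ → ℝ := fun t => ∫ s in (0:ℝ)..t, β i s with hBdef
    have hB : ∀ t, HasDerivAt B (β i t) t := fun t =>
      ((hβc i).integral_hasStrictDerivAt 0 t).hasDerivAt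
    have hBc : Continuous B := continuous_iff_continuousAt.2 fun t => (hB t).continuousAt
    have hBaa : AlmostAutomorphic B := real_bb hV v hv (hβaa i) (hβprim i)
    set E : ℝ → ℂ := fun t => Complex.exp (-(Complex.I * (B t : ℂ))) with hEdef
    have hEc : Continuous E :=
      Complex.continuous_exp.comp
        ((continuous_const.mul (Complex.continuous_ofReal.comp hBc)).neg)
    have hE : ∀ t, HasDerivAt E (Complex.exp (-(Complex.I * (B t : ℂ))) *
        (-(Complex.I * (β i t : ℂ)))) t := by
      intro t
      exact (((hB t).ofReal_comp.const_mul Complex.I).neg).cexp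
    set S : Finset (Fin p) := Finset.univ.filter (fun j => i < j) with hSdef
    set g : ℝ → V := fun t => (∑ j ∈ S, A t i j • y t j) + f t i with hgdef
    have hgc : Continuous g := by
      refine (continuous_finset_sum S fun j _ => ?_).add ((continuous_apply i).comp hfc)
      exact ((hAaa i j).1).smul (hyc j)
    have hgaa : AlmostAutomorphic g := by
      refine aa_add (aa_sum S (fun j t => A t i j • y t j) fun j hj => ?_)
        (aa_comp hfaa (continuous_apply i))
      exact aa_smul (hAaa i j) (hind j (Finset.mem_filter.1 hj).2)
    have hsum : ∀ t, (∑ j : Fin p, A t i j • y t j) =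
        (Complex.I * (β i t : ℂ)) • y t i + ∑ j ∈ S, A t i j • y t j := by
      intro t
      have hterm : ∀ j ∈ Finset.univ, A t i j • y t j =
          (if j = i then (Complex.I * (β i t : ℂ)) • y t i else 0) +
          (if i < j then A t i j • y t j else 0) := by
        intro j _
        rcases lt_trichotomy j i with h | h | h
        · simp [htri t i j h, h.ne, not_lt.2 h.le]
        · subst h; simp [hdiag j t]
        · simp [h, h.ne']
      rw [Finset.sum_congr rfl hterm, Finset.sum_add_distrib]
      congr 1
      · simp
      · rw [hSdef, Finset.sum_filter]
    have hyi : ∀ t, HasDerivAt (fun u => y u i)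
        ((Complex.I * (β i t : ℂ)) • y t i + g t) t := by
      intro t
      convert hy t i using 1
      rw [hgdef]
      simp only []
      rw [hsum t, add_assoc]
    set z : ℝ → V := fun t => E t • y t i with hzdef
    have hz : ∀ t, HasDerivAt z (E t • g t) t := by
      intro t
      have h1 := (hE t).smul (hyi t)
      convert h1 using 1
      · rfl
      rw [hEdef]
      beta_reduce
      module
    have hhc : Continuous (fun s => E s • g s) := hEc.smul hgc
    have hint : ∀ t, ∫ s in (0:ℝ)..t, E s • g s = z t - z 0 := fun t =>
      intervalIntegral.integral_eq_sub_of_hasDerivAt (fun s _ => hz s)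
        (hhc.intervalIntegrable 0 t)
    have hEnorm : ∀ t, ‖E t‖ = 1 := by
      intro t
      rw [hEdef]
      simp only []
      rw [Complex.norm_exp]
      simp [Complex.mul_re]
    have hzb : ∀ t, ‖z t‖ ≤ C := by
      intro t
      rw [hzdef]
      simp only []
      rw [norm_smul, hEnorm, one_mul]
      exact (norm_le_pi_norm (y t) i).trans (hC t)
    have hEaa : AlmostAutomorphic E :=
      aa_comp hBaa (F := fun x : ℝ => Complex.exp (-(Complex.I * (x : ℂ))))
        (Complex.continuous_exp.comp
          ((continuous_const.mul Complex.continuous_ofReal).neg))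
    have hhaa : AlmostAutomorphic (fun s => E s • g s) := aa_smul hEaa hgaa
    have hP : AlmostAutomorphic (fun t => ∫ s in (0:ℝ)..t, E s • g s) := by
      refine hV _ hhaa ⟨C + C, fun t => ?_⟩
      rw [hint t]
      exact (norm_sub_le _ _).trans (add_le_add (hzb t) (hzb 0))
    have hexpaa : AlmostAutomorphic (fun t => Complex.exp (Complex.I * (B t : ℂ))) :=
      aa_comp hBaa (F := fun x : ℝ => Complex.exp (Complex.I * (x : ℂ)))
        (Complex.continuous_exp.comp (continuous_const.mul Complex.continuous_ofReal))
    have hrepr : (fun t => y t i) = fun t =>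
        Complex.exp (Complex.I * (B t : ℂ)) • (z 0 + ∫ s in (0:ℝ)..t, E s • g s) := by
      funext t
      rw [hint t]
      have h0 : z 0 + (z t - z 0) = z t := by abel
      rw [h0, hzdef]
      simp only []
      rw [smul_smul, ← Complex.exp_add]
      simp
    rw [hrepr]
    exact aa_smul hexpaa (aa_add (aa_const (z 0)) hP)
  -- downward induction
  have all : ∀ n : ℕ, ∀ i : Fin p, p - i.val ≤ n → AlmostAutomorphic (fun t => y t i) := by
    intro n
    induction n with
    | zero => intro i hi; exact absurd hi (by have := i.isLt; omega)
    | succ n ih =>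
      intro i _
      refine key i fun j hj => ih j ?_
      have h1 : i.val < j.val := hj
      have := j.isLt
      omega
  have comp_aa : ∀ i : Fin p, AlmostAutomorphic (fun t => y t i) := fun i =>
    all p i (by omega)
  exact aa_pi (fun i t => y t i) comp_aa
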